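/- For the homogeneous one-dimensional continuous loss network with call-arrival rate κ and call-length distribution π with first moment ρ₁ and second moment ρ₂, choosing the size function q(L) = max(L,1) yields α_q ≤ κ(ρ₂ + ρ₁ + 1). Hence κ(ρ₂ + ρ₁ + 1) < 1 is a sufficient condition for α_q < 1. -/

import Mathlib

open MeasureTheory

/-- For the homogeneous one-dimensional loss network with call-arrival rate `κ` and
call-length distribution `π` (supported on `(0,∞)`) with moments `ρ₁, ρ₂`, the size
function `q(L) = max(L,1)` yields `α_q ≤ κ(ρ₂ + ρ₁ + 1)`; hence `κ(ρ₂ + ρ₁ + 1) < 1`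
is a sufficient condition for `α_q < 1`. -/
theorem loss_network_alpha_bound (κ : ℝ) (hκ : 0 ≤ κ)
    (π : Measure ℝ) [IsProbabilityMeasure π] (hsupp : π (Set.Iic 0) = 0)
    (ρ₁ ρ₂ : ℝ) (hρ₁ : ρ₁ = ∫ x, x ∂π) (hρ₂ : ρ₂ = ∫ x, x ^ 2 ∂π)
    (hint1 : Integrable (fun x => x) π) (hint2 : Integrable (fun x => x ^ 2) π) :
    (∀ L : ℝ, 0 ≤ L →
      (∫ L', κ * (L + L') * max L' 1 ∂π) / max L 1 ≤ κ * (ρ₂ + ρ₁ + 1))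
    ∧ (κ * (ρ₂ + ρ₁ + 1) < 1 → ∀ L : ℝ, 0 ≤ L →
      (∫ L', κ * (L + L') * max L' 1 ∂π) / max L 1 < 1) := by
  have hae : ∀ᵐ x ∂π, 0 < x := by
    rw [ae_iff]
    convert hsupp using 2
    ext x
    simp [not_lt]
  -- integrability of max x 1
  have hmeas : Measurable (fun x : ℝ => max x 1) := measurable_id.max measurable_const
  have h1 : Integrable (fun x : ℝ => max x 1) π := by
    refine (hint1.abs.add (integrable_const 1)).mono' hmeas.aestronglyMeasurable ?_
    filter_upwards with x
    simp only [Pi.add_apply, Real.norm_eq_abs]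
    rw [abs_of_pos (lt_of_lt_of_le one_pos (le_max_right x 1))]
    rcases le_total x 1 with h | h
    · simp only [max_eq_right h]
      have := abs_nonneg x
      linarith
    · simp only [max_eq_left h]
      have := le_abs_self x
      linarith
  have h2 : Integrable (fun x : ℝ => x * max x 1) π := by
    refine (hint2.add hint1.abs).mono'
      (measurable_id.mul hmeas).aestronglyMeasurable ?_
    filter_upwards with x
    simp only [Pi.add_apply, Real.norm_eq_abs]
    rw [abs_mul, abs_of_pos (lt_of_lt_of_le one_pos (le_max_right x 1))]
    rcases le_total x 1 with h | h
    · simp only [max_eq_right h, mul_one]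
      nlinarith [sq_nonneg x, le_abs_self x, abs_nonneg x]
    · simp only [max_eq_left h]
      have h0 : 0 ≤ x := le_trans zero_le_one h
      rw [abs_of_nonneg h0]
      nlinarith
  have key : ∀ L : ℝ, 0 ≤ L →
      (∫ L', κ * (L + L') * max L' 1 ∂π) / max L 1 ≤ κ * (ρ₂ + ρ₁ + 1) := by
    intro L hL
    set m := max L 1 with hm
    have hm1 : (1:ℝ) ≤ m := le_max_right L 1
    have hm0 : (0:ℝ) < m := lt_of_lt_of_le one_pos hm1
    have hLm : L ≤ m := le_max_left L 1
    have hf : Integrable (fun x : ℝ => κ * (L + x) * max x 1) π := by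
      have := (h1.const_mul (κ * L)).add (h2.const_mul κ)
      refine this.congr ?_
      filter_upwards with x
      simp only [Pi.add_apply]
      ring
    have hg : Integrable (fun x : ℝ => m * κ * (x ^ 2 + x + 1)) π := by
      exact ((hint2.add hint1).add (integrable_const 1)).const_mul (m * κ)
    have hmono : ∫ x, κ * (L + x) * max x 1 ∂π ≤ ∫ x, m * κ * (x ^ 2 + x + 1) ∂π := by
      refine integral_mono_ae hf hg ?_
      filter_upwards [hae] with x hx
      have hx0 : 0 ≤ x := hx.le
      have hb : (L + x) * max x 1 ≤ m * (x ^ 2 + x + 1) := by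
        have h3 : L + x ≤ m * (1 + x) := by nlinarith
        have h4 : (1 + x) * max x 1 ≤ x ^ 2 + x + 1 := by
          rcases le_total x 1 with h | h
          · simp only [max_eq_right h]; nlinarith
          · simp only [max_eq_left h]; nlinarith
        have hmax0 : (0:ℝ) ≤ max x 1 := le_trans zero_le_one (le_max_right x 1)
        calc (L + x) * max x 1 ≤ m * (1 + x) * max x 1 := by
              exact mul_le_mul_of_nonneg_right h3 hmax0
          _ = m * ((1 + x) * max x 1) := by ring
          _ ≤ m * (x ^ 2 + x + 1) := by
              exact mul_le_mul_of_nonneg_left h4 hm0.le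
      calc κ * (L + x) * max x 1 = κ * ((L + x) * max x 1) := by ring
        _ ≤ κ * (m * (x ^ 2 + x + 1)) := mul_le_mul_of_nonneg_left hb hκ
        _ = m * κ * (x ^ 2 + x + 1) := by ring
    have hgval : ∫ x, m * κ * (x ^ 2 + x + 1) ∂π = m * (κ * (ρ₂ + ρ₁ + 1)) := by
      have hint12 : Integrable (fun a : ℝ => a ^ 2 + a) π := hint2.add hint1
      rw [integral_const_mul, integral_add hint12 (integrable_const 1),
        integral_add hint2 hint1, integral_const]
      simp only [measure_univ, probReal_univ, ENNReal.toReal_one, smul_eq_mul, one_mul, hρ₁, hρ₂]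
      ring
    rw [div_le_iff₀ hm0]
    rw [hgval] at hmono
    linarith
  refine ⟨key, fun hlt L hL => lt_of_le_of_lt (key L hL) hlt⟩
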